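/- Let F^negpt := {δ_x : x ∈ X} ∪ {-δ_x : x ∈ X} be the class of point functions and negated point functions on an infinite set X, where δ_x(y) = 1 iff y = x. Then vc(F^negpt) = Ldim(F^negpt) = 3, but the class F̃^negpt := {SOA_G : G ⊆ F^negpt} has infinite VC dimension. -/

import Mathlib

open Classical

/-- The subclass of `G` consistent with a finite list of labeled examples. -/
def restrictList {X : Type*} (G : Set (X → Bool)) (S : List (X × Bool)) : Set (X → Bool) :=
  {f ∈ G | ∀ p ∈ S, f p.1 = p.2}

/-- `G` restricted to hypotheses with `f x = b`. -/
def res {X : Type*} (G : Set (X → Bool)) (x : X) (b : Bool) : Set (X → Bool) :=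
  {f ∈ G | f x = b}

/-- The subclass of `G` consistent with the branch `b` of the binary tree `t`
(nodes of `t` are indexed by the list of bits on the path from the root). -/
def branchRestrict {X : Type*} (G : Set (X → Bool)) (t : List Bool → X) (b : List Bool) :
    Set (X → Bool) :=
  {f ∈ G | ∀ i < b.length, f (t (b.take i)) = b.getD i false}

/-- `G` shatters the complete binary tree `t` to depth `n`. -/
def ShattersTree {X : Type*} (G : Set (X → Bool)) (t : List Bool → X) (n : ℕ) : Prop :=
  ∀ b : List Bool, b.length = n → (branchRestrict G t b).Nonempty

/-- `G` shatters some complete `X`-valued binary tree of depth `n`. -/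
def ShattersDepth {X : Type*} (G : Set (X → Bool)) (n : ℕ) : Prop :=
  ∃ t : List Bool → X, ShattersTree G t n

/-- Littlestone dimension: the largest depth of a shattered tree, with `Ldim ∅ = ⊥` (i.e. `-1`). -/
noncomputable def Ldim {X : Type*} (G : Set (X → Bool)) : WithBot ℕ∞ :=
  ⨆ n : {n : ℕ // ShattersDepth G n}, (n.1 : WithBot ℕ∞)

/-- `G` is `k`-irreducible: every depth-`k` tree has a branch whose restriction preserves `Ldim`. -/
def Irred {X : Type*} (G : Set (X → Bool)) (k : ℕ) : Prop :=
  ∀ t : List Bool → X, ∃ b : List Bool, b.length = k ∧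
    Ldim (branchRestrict G t b) = Ldim G

/-- The SOA classifier of `G`: `SOA G x = true` iff `Ldim (G|_(x,1)) ≥ Ldim (G|_(x,-1))`. -/
noncomputable def SOA {X : Type*} (G : Set (X → Bool)) (x : X) : Bool :=
  if Ldim (res G x false) ≤ Ldim (res G x true) then true else false

/-- `G` shatters the finite set `s` in the VC sense. -/
def VCShatters {X : Type*} (G : Set (X → Bool)) (s : Finset X) : Prop :=
  ∀ b : X → Bool, ∃ f ∈ G, ∀ x ∈ s, f x = b x

/-- VC dimension, with `VCdim ∅ = ⊥`. -/
noncomputable def VCdim {X : Type*} (G : Set (X → Bool)) : WithBot ℕ∞ :=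
  ⨆ s : {s : Finset X // VCShatters G s}, (s.1.card : WithBot ℕ∞)

/-- The dual class of `F`: one hypothesis `f ↦ f x` on domain `F` for each `x ∈ X`. -/
def dualClass {X : Type*} (F : Set (X → Bool)) : Set (↥F → Bool) :=
  {g | ∃ x : X, g = fun f => f.1 x}

/-- The point function `δ_x`: `true` exactly at `x`. -/
noncomputable def pointFn {X : Type*} (x : X) : X → Bool :=
  fun y => if y = x then true else false

/-- The class of point functions and negated point functions on `X`. -/
noncomputable def Fnegpt (X : Type*) : Set (X → Bool) :=
  {f | ∃ x : X, f = pointFn x} ∪ {f | ∃ x : X, f = fun y => ! pointFn x y}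

-- ==================== auxiliary ====================
noncomputable def negFn {X : Type*} (x : X) : X → Bool := fun y => ! pointFn x y

section Aux
variable {X : Type*}

lemma pointFn_self (x : X) : pointFn x x = true := if_pos rfl
lemma pointFn_ne {x y : X} (h : y ≠ x) : pointFn x y = false := if_neg h
lemma negFn_self (x : X) : negFn x x = false := by simp [negFn, pointFn_self]
lemma negFn_ne {x y : X} (h : y ≠ x) : negFn x y = true := by simp [negFn, pointFn_ne h]

lemma eq_of_pointFn_eq_true {x y : X} (h : pointFn x y = true) : y = x := by
  by_contra hc; rw [pointFn_ne hc] at h; exact Bool.false_ne_true h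

lemma eq_of_negFn_eq_false {x y : X} (h : negFn x y = false) : y = x := by
  by_contra hc; rw [negFn_ne hc] at h; exact absurd h (by simp)

lemma shatters_mono {G G' : Set (X → Bool)} (h : G ⊆ G') {n : ℕ} :
    ShattersDepth G n → ShattersDepth G' n := by
  rintro ⟨t, ht⟩
  exact ⟨t, fun b hb => ((ht b hb).mono (fun f hf => ⟨h hf.1, hf.2⟩))⟩

lemma shatters_step {G : Set (X → Bool)} {t : List Bool → X} {n : ℕ} (c : Bool)
    (h : ShattersTree G t (n+1)) :
    ShattersDepth (res G (t []) c) n := by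
  refine ⟨fun l => t (c :: l), fun b hb => ?_⟩
  obtain ⟨f, hfG, hf⟩ := h (c :: b) (by simp [hb])
  refine ⟨f, ⟨⟨hfG, ?_⟩, ?_⟩⟩
  · have := hf 0 (by simp)
    simpa using this
  · intro i hi
    have := hf (i+1) (by simpa using Nat.succ_lt_succ hi)
    simpa using this

lemma shatters_of_succ {G : Set (X → Bool)} {n : ℕ} :
    ShattersDepth G (n+1) → ShattersDepth G n := by
  rintro ⟨t, ht⟩
  exact shatters_mono (fun f hf => hf.1) (shatters_step true ht)

lemma shatters_le {G : Set (X → Bool)} : ∀ {m n : ℕ}, n ≤ m → ShattersDepth G m → ShattersDepth G n := by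
  intro m
  induction m with
  | zero => intro n h hs; rwa [Nat.le_zero.mp h]
  | succ k ih =>
    intro n h hs
    rcases Nat.eq_or_lt_of_le h with rfl | h'
    · exact hs
    · exact ih (Nat.lt_succ_iff.mp h') (shatters_of_succ hs)

lemma Ldim_le_of {G : Set (X → Bool)} (n : ℕ) (h : ¬ ShattersDepth G (n+1)) :
    Ldim G ≤ (n : WithBot ℕ∞) := by
  apply iSup_le
  rintro ⟨m, hm⟩
  have hmn : m ≤ n := by
    by_contra hc
    push_neg at hc
    exact h (shatters_le hc hm)
  exact_mod_cast hmn

lemma Ldim_ge {G : Set (X → Bool)} {n : ℕ} (h : ShattersDepth G n) :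
    (n : WithBot ℕ∞) ≤ Ldim G :=
  le_iSup (fun m : {m : ℕ // ShattersDepth G m} => (m.1 : WithBot ℕ∞)) ⟨n, h⟩

lemma not_shatters_one {G : Set (X → Bool)} (h : ∀ f ∈ G, ∀ g ∈ G, f = g) :
    ¬ ShattersDepth G 1 := by
  rintro ⟨t, ht⟩
  obtain ⟨f, hfG, hf⟩ := ht [true] rfl
  obtain ⟨g, hgG, hg⟩ := ht [false] rfl
  have h1 := hf 0 (by norm_num)
  have h2 := hg 0 (by norm_num)
  rw [h f hfG g hgG] at h1
  simp at h1 h2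
  rw [h1] at h2
  simp at h2

lemma not_shatters_two {G : Set (X → Bool)} (a b : X → Bool)
    (h : ∀ f ∈ G, f = a ∨ f = b) : ¬ ShattersDepth G 2 := by
  rintro ⟨t, ht⟩
  obtain ⟨f1, h1G, h1⟩ := ht [true, true] rfl
  obtain ⟨f2, h2G, h2⟩ := ht [true, false] rfl
  obtain ⟨f3, h3G, h3⟩ := ht [false, true] rfl
  obtain ⟨f4, h4G, h4⟩ := ht [false, false] rfl
  have e1a := h1 0 (by norm_num); have e1b := h1 1 (by norm_num)
  have e2a := h2 0 (by norm_num); have e2b := h2 1 (by norm_num)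
  have e3a := h3 0 (by norm_num); have e3b := h3 1 (by norm_num)
  have e4a := h4 0 (by norm_num); have e4b := h4 1 (by norm_num)
  simp at e1a e1b e2a e2b e3a e3b e4a e4b
  rcases h f1 h1G with rfl | rfl <;> rcases h f2 h2G with rfl | rfl <;>
    rcases h f3 h3G with rfl | rfl <;> rcases h f4 h4G with rfl | rfl <;> simp_all

end Aux

section Shapes
variable {X : Type*}

/-- A class of negated point functions cannot shatter depth 2. -/
lemma negs_not2 {G : Set (X → Bool)} (hG : ∀ f ∈ G, ∃ z : X, f = negFn z) :
    ¬ ShattersDepth G 2 := by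
  rintro ⟨t, ht⟩
  have h1 : ShattersDepth (res G (t []) false) 1 := shatters_step false ht
  refine not_shatters_one ?_ h1
  rintro f ⟨hfG, hfv⟩ g ⟨hgG, hgv⟩
  obtain ⟨z, rfl⟩ := hG f hfG
  obtain ⟨w, rfl⟩ := hG g hgG
  rw [← eq_of_negFn_eq_false hfv, ← eq_of_negFn_eq_false hgv]

/-- A class of point functions cannot shatter depth 2. -/
lemma pts_not2 {G : Set (X → Bool)} (hG : ∀ f ∈ G, ∃ a : X, f = pointFn a) :
    ¬ ShattersDepth G 2 := by
  rintro ⟨t, ht⟩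
  have h1 : ShattersDepth (res G (t []) true) 1 := shatters_step true ht
  refine not_shatters_one ?_ h1
  rintro f ⟨hfG, hfv⟩ g ⟨hgG, hgv⟩
  obtain ⟨z, rfl⟩ := hG f hfG
  obtain ⟨w, rfl⟩ := hG g hgG
  rw [← eq_of_pointFn_eq_true hfv, ← eq_of_pointFn_eq_true hgv]

/-- One point function plus negated point functions cannot shatter depth 3. -/
lemma onept_negs_not3 {G : Set (X → Bool)} (x : X)
    (hG : ∀ f ∈ G, f = pointFn x ∨ ∃ z : X, f = negFn z) :
    ¬ ShattersDepth G 3 := by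
  rintro ⟨t, ht⟩
  have h2 : ShattersDepth (res G (t []) false) 2 := shatters_step false ht
  by_cases hr : t [] = x
  · refine not_shatters_two (negFn x) (negFn x) ?_ h2
    rintro f ⟨hfG, hfv⟩
    rcases hG f hfG with rfl | ⟨z, rfl⟩
    · rw [hr, pointFn_self] at hfv; simp at hfv
    · left; rw [← eq_of_negFn_eq_false hfv, hr]
  · refine not_shatters_two (pointFn x) (negFn (t [])) ?_ h2
    rintro f ⟨hfG, hfv⟩
    rcases hG f hfG with rfl | ⟨z, rfl⟩
    · left; rfl
    · right; rw [← eq_of_negFn_eq_false hfv]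

/-- Point functions plus one negated point function cannot shatter depth 3. -/
lemma pts_oneneg_not3 {G : Set (X → Bool)} (x : X)
    (hG : ∀ f ∈ G, (∃ a : X, f = pointFn a) ∨ f = negFn x) :
    ¬ ShattersDepth G 3 := by
  rintro ⟨t, ht⟩
  have h2 : ShattersDepth (res G (t []) true) 2 := shatters_step true ht
  by_cases hr : t [] = x
  · refine not_shatters_two (pointFn x) (pointFn x) ?_ h2
    rintro f ⟨hfG, hfv⟩
    rcases hG f hfG with ⟨a, rfl⟩ | rfl
    · left; rw [← eq_of_pointFn_eq_true hfv, hr]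
    · rw [hr, negFn_self] at hfv; simp at hfv
  · refine not_shatters_two (pointFn (t [])) (negFn x) ?_ h2
    rintro f ⟨hfG, hfv⟩
    rcases hG f hfG with ⟨a, rfl⟩ | rfl
    · left; rw [← eq_of_pointFn_eq_true hfv]
    · right; rfl

/-- Point functions plus negated point functions cannot shatter depth 4. -/
lemma ptsnegs_not4 {G : Set (X → Bool)} 
    (hG : ∀ f ∈ G, (∃ a : X, f = pointFn a) ∨ (∃ z : X, f = negFn z)) :
    ¬ ShattersDepth G 4 := by
  rintro ⟨t, ht⟩
  have h3 : ShattersDepth (res G (t []) true) 3 := shatters_step true ht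
  refine onept_negs_not3 (t []) ?_ h3
  rintro f ⟨hfG, hfv⟩
  rcases hG f hfG with ⟨a, rfl⟩ | ⟨z, rfl⟩
  · left; rw [← eq_of_pointFn_eq_true hfv]
  · right; exact ⟨z, rfl⟩

end Shapes

section Lower
variable {X : Type*}

lemma mem_branchRestrict_two {G : Set (X → Bool)} {f : X → Bool} {t : List Bool → X}
    {b0 b1 : Bool} :
    f ∈ branchRestrict G t [b0, b1] ↔ f ∈ G ∧ f (t []) = b0 ∧ f (t [b0]) = b1 := by
  constructor
  · rintro ⟨hfG, hf⟩
    refine ⟨hfG, ?_, ?_⟩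
    · simpa using hf 0 (by norm_num)
    · simpa using hf 1 (by norm_num)
  · rintro ⟨hfG, h0, h1⟩
    refine ⟨hfG, ?_⟩
    intro i hi
    simp only [List.length_cons, List.length_nil] at hi
    interval_cases i
    · simpa using h0
    · simpa using h1

/-- {pointFn x, negFn y, negFn z, negFn w} shatters depth 2, for distinct x,y,z,w. -/
lemma shatters2_pos (x y z w : X) (hxy : x ≠ y) (hxz : x ≠ z) (hxw : x ≠ w)
    (hyz : y ≠ z) (hyw : y ≠ w) (hzw : z ≠ w) :
    ShattersDepth ({pointFn x, negFn y, negFn z, negFn w} : Set (X → Bool)) 2 := by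
  refine ⟨fun l => if l = [] then y else if l = [true] then w else z, ?_⟩
  intro b hb
  match b, hb with
  | [b0, b1], _ =>
    cases b0 <;> cases b1
    · -- [false, false] : f y = false, f z = false : pointFn x
      exact ⟨pointFn x, mem_branchRestrict_two.mpr ⟨by simp,
        by simp [pointFn, negFn, hxy, hxy.symm, hxz, hxz.symm, hxw, hxw.symm, hyz, hyz.symm, hyw, hyw.symm, hzw, hzw.symm]⟩⟩
    · -- [false, true] : f y = false, f z = true : negFn y
      exact ⟨negFn y, mem_branchRestrict_two.mpr ⟨by simp,
        by simp [pointFn, negFn, hxy, hxy.symm, hxz, hxz.symm, hxw, hxw.symm, hyz, hyz.symm, hyw, hyw.symm, hzw, hzw.symm]⟩⟩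
    · -- [true, false] : f y = true, f w = false : negFn w
      exact ⟨negFn w, mem_branchRestrict_two.mpr ⟨by simp,
        by simp [pointFn, negFn, hxy, hxy.symm, hxz, hxz.symm, hxw, hxw.symm, hyz, hyz.symm, hyw, hyw.symm, hzw, hzw.symm]⟩⟩
    · -- [true, true] : f y = true, f w = true : negFn z
      exact ⟨negFn z, mem_branchRestrict_two.mpr ⟨by simp,
        by simp [pointFn, negFn, hxy, hxy.symm, hxz, hxz.symm, hxw, hxw.symm, hyz, hyz.symm, hyw, hyw.symm, hzw, hzw.symm]⟩⟩

/-- {pointFn a1, pointFn a2, pointFn a3, negFn x} shatters depth 2, for distinct a1,a2,a3,x. -/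
lemma shatters2_neg (a1 a2 a3 x : X) (h12 : a1 ≠ a2) (h13 : a1 ≠ a3) (h23 : a2 ≠ a3)
    (hx1 : x ≠ a1) (hx2 : x ≠ a2) (hx3 : x ≠ a3) :
    ShattersDepth ({pointFn a1, pointFn a2, pointFn a3, negFn x} : Set (X → Bool)) 2 := by
  refine ⟨fun l => if l = [] then a1 else a2, ?_⟩
  intro b hb
  match b, hb with
  | [b0, b1], _ =>
    cases b0 <;> cases b1
    · -- f a1 = false, f a2 = false : pointFn a3
      exact ⟨pointFn a3, mem_branchRestrict_two.mpr ⟨by simp,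
        by simp [pointFn, negFn, h12, h12.symm, h13, h13.symm, h23, h23.symm, hx1, hx1.symm, hx2, hx2.symm, hx3, hx3.symm]⟩⟩
    · -- f a1 = false, f a2 = true : pointFn a2
      exact ⟨pointFn a2, mem_branchRestrict_two.mpr ⟨by simp,
        by simp [pointFn, negFn, h12, h12.symm, h13, h13.symm, h23, h23.symm, hx1, hx1.symm, hx2, hx2.symm, hx3, hx3.symm]⟩⟩
    · -- f a1 = true, f a2 = false : pointFn a1
      exact ⟨pointFn a1, mem_branchRestrict_two.mpr ⟨by simp,
        by simp [pointFn, negFn, h12, h12.symm, h13, h13.symm, h23, h23.symm, hx1, hx1.symm, hx2, hx2.symm, hx3, hx3.symm]⟩⟩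
    · -- f a1 = true, f a2 = true : negFn x
      exact ⟨negFn x, mem_branchRestrict_two.mpr ⟨by simp,
        by simp [pointFn, negFn, h12, h12.symm, h13, h13.symm, h23, h23.symm, hx1, hx1.symm, hx2, hx2.symm, hx3, hx3.symm]⟩⟩

end Lower

section SOAsec
variable {X : Type*} [Infinite X]

/-- The class of point functions on `T` together with all negated point functions. -/
noncomputable def Gof (T : Set X) : Set (X → Bool) :=
  {f | ∃ a ∈ T, f = pointFn a} ∪ {f | ∃ z : X, f = negFn z}

lemma Gof_subset (T : Set X) : Gof T ⊆ Fnegpt X := by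
  rintro f (⟨a, _, rfl⟩ | ⟨z, rfl⟩)
  · exact Or.inl ⟨a, rfl⟩
  · exact Or.inr ⟨z, rfl⟩

lemma SOA_Gof_true {T : Set X} {x : X} (hx : x ∈ T) : SOA (Gof T) x = true := by
  -- fresh points
  obtain ⟨y, hy⟩ := Infinite.exists_notMem_finset ({x} : Finset X)
  obtain ⟨z, hz⟩ := Infinite.exists_notMem_finset ({x, y} : Finset X)
  obtain ⟨w, hw⟩ := Infinite.exists_notMem_finset ({x, y, z} : Finset X)
  simp only [Finset.mem_insert, Finset.mem_singleton, not_or] at hy hz hw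
  have hub : Ldim (res (Gof T) x false) ≤ (2 : WithBot ℕ∞) := by
    refine Ldim_le_of 2 (pts_oneneg_not3 x ?_)
    rintro f ⟨hfG, hfv⟩
    rcases hfG with ⟨a, _, rfl⟩ | ⟨u, rfl⟩
    · exact Or.inl ⟨a, rfl⟩
    · right; rw [← eq_of_negFn_eq_false hfv]
  have hlb : (2 : WithBot ℕ∞) ≤ Ldim (res (Gof T) x true) := by
    refine Ldim_ge (shatters_mono ?_ (shatters2_pos x y z w
      (by tauto) (by tauto) (by tauto) (by tauto) (by tauto) (by tauto)))
    rintro f (rfl | rfl | rfl | rfl)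
    · exact ⟨Or.inl ⟨x, hx, rfl⟩, pointFn_self x⟩
    · exact ⟨Or.inr ⟨y, rfl⟩, negFn_ne (by tauto)⟩
    · exact ⟨Or.inr ⟨z, rfl⟩, negFn_ne (by tauto)⟩
    · exact ⟨Or.inr ⟨w, rfl⟩, negFn_ne (by tauto)⟩
  rw [SOA, if_pos (le_trans hub hlb)]

lemma SOA_Gof_false {T : Set X} {x a1 a2 a3 : X} (hx : x ∉ T)
    (h1 : a1 ∈ T) (h2 : a2 ∈ T) (h3 : a3 ∈ T)
    (h12 : a1 ≠ a2) (h13 : a1 ≠ a3) (h23 : a2 ≠ a3) : SOA (Gof T) x = false := by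
  have hx1 : x ≠ a1 := fun h => hx (h ▸ h1)
  have hx2 : x ≠ a2 := fun h => hx (h ▸ h2)
  have hx3 : x ≠ a3 := fun h => hx (h ▸ h3)
  have hub : Ldim (res (Gof T) x true) ≤ (1 : WithBot ℕ∞) := by
    refine Ldim_le_of 1 (negs_not2 ?_)
    rintro f ⟨hfG, hfv⟩
    rcases hfG with ⟨a, ha, rfl⟩ | ⟨u, rfl⟩
    · exact absurd (eq_of_pointFn_eq_true hfv ▸ ha) hx
    · exact ⟨u, rfl⟩
  have hlb : (2 : WithBot ℕ∞) ≤ Ldim (res (Gof T) x false) := by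
    refine Ldim_ge (shatters_mono ?_ (shatters2_neg a1 a2 a3 x h12 h13 h23 hx1 hx2 hx3))
    rintro f (rfl | rfl | rfl | rfl)
    · exact ⟨Or.inl ⟨a1, h1, rfl⟩, pointFn_ne hx1⟩
    · exact ⟨Or.inl ⟨a2, h2, rfl⟩, pointFn_ne hx2⟩
    · exact ⟨Or.inl ⟨a3, h3, rfl⟩, pointFn_ne hx3⟩
    · exact ⟨Or.inr ⟨x, rfl⟩, negFn_self x⟩
  rw [SOA, if_neg]
  intro hle
  have : (2 : WithBot ℕ∞) ≤ 1 := le_trans hlb (le_trans hle hub)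
  exact absurd this (by decide)

end SOAsec

section Main
variable {X : Type*}

lemma exists_fnegpt (e0 e1 e2 e3 : X)
    (h01 : e0 ≠ e1) (h02 : e0 ≠ e2) (h03 : e0 ≠ e3)
    (h12 : e1 ≠ e2) (h13 : e1 ≠ e3) (h23 : e2 ≠ e3) (b0 b1 b2 : Bool) :
    ∃ f ∈ Fnegpt X, f e0 = b0 ∧ f e1 = b1 ∧ f e2 = b2 := by
  cases b0 <;> cases b1 <;> cases b2
  · exact ⟨pointFn e3, Or.inl ⟨e3, rfl⟩,
      by simp [pointFn, h03, h13, h23]⟩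
  · exact ⟨pointFn e2, Or.inl ⟨e2, rfl⟩,
      by simp [pointFn, h02, h12]⟩
  · exact ⟨pointFn e1, Or.inl ⟨e1, rfl⟩,
      by simp [pointFn, h01, h12.symm]⟩
  · exact ⟨negFn e0, Or.inr ⟨e0, rfl⟩,
      by simp [pointFn, negFn, h01.symm, h02.symm]⟩
  · exact ⟨pointFn e0, Or.inl ⟨e0, rfl⟩,
      by simp [pointFn, h01.symm, h02.symm]⟩
  · exact ⟨negFn e1, Or.inr ⟨e1, rfl⟩,
      by simp [pointFn, negFn, h01, h12.symm]⟩
  · exact ⟨negFn e2, Or.inr ⟨e2, rfl⟩,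
      by simp [pointFn, negFn, h02, h12]⟩
  · exact ⟨negFn e3, Or.inr ⟨e3, rfl⟩,
      by simp [pointFn, negFn, h03, h13, h23]⟩

lemma fnegpt_shape : ∀ f ∈ Fnegpt X, (∃ a : X, f = pointFn a) ∨ (∃ z : X, f = negFn z) := by
  rintro f (⟨a, rfl⟩ | ⟨z, rfl⟩)
  · exact Or.inl ⟨a, rfl⟩
  · exact Or.inr ⟨z, rfl⟩

lemma vcshatters_le_three {s : Finset X} (hs : VCShatters (Fnegpt X) s) :
    s.card ≤ 3 := by
  by_contra hc
  push_neg at hc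
  obtain ⟨t, hts, ht4⟩ := Finset.exists_subset_card_eq (show 4 ≤ s.card from hc)
  obtain ⟨a, ha⟩ := Finset.card_pos.mp (by omega : 0 < t.card)
  have h3 : (t.erase a).card = 3 := by rw [Finset.card_erase_of_mem ha, ht4]
  obtain ⟨b, c, d, hbc, hbd, hcd, habc⟩ := Finset.card_eq_three.mp h3
  have hb : b ∈ t.erase a := habc ▸ by simp
  have hcm : c ∈ t.erase a := habc ▸ by simp
  have hdm : d ∈ t.erase a := habc ▸ by simp
  have hab : a ≠ b := fun h => (Finset.mem_erase.mp hb).1 h.symm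
  have hca : c ≠ a := (Finset.mem_erase.mp hcm).1
  have hda : d ≠ a := (Finset.mem_erase.mp hdm).1
  have has : a ∈ s := hts ha
  have hbs : b ∈ s := hts (Finset.mem_of_mem_erase hb)
  have hcs : c ∈ s := hts (Finset.mem_of_mem_erase hcm)
  have hds : d ∈ s := hts (Finset.mem_of_mem_erase hdm)
  obtain ⟨f, hfF, hf⟩ := hs (fun y => decide (y = a ∨ y = b))
  have hfa : f a = true := by rw [hf a has]; simp
  have hfb : f b = true := by rw [hf b hbs]; simp
  have hfc : f c = false := by rw [hf c hcs]; simp [hca, hbc.symm]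
  have hfd : f d = false := by rw [hf d hds]; simp [hda, hbd.symm]
  rcases fnegpt_shape f hfF with ⟨z, rfl⟩ | ⟨z, rfl⟩
  · exact hab ((eq_of_pointFn_eq_true hfa).trans (eq_of_pointFn_eq_true hfb).symm)
  · exact hcd ((eq_of_negFn_eq_false hfc).trans (eq_of_negFn_eq_false hfd).symm)

end Main

section Final
variable {X : Type*}

lemma vcdim_fnegpt [Infinite X] : VCdim (Fnegpt X) = (3 : WithBot ℕ∞) := by
  obtain ⟨e1, h1⟩ := Infinite.exists_notMem_finset ({} : Finset X)
  obtain ⟨e2, h2⟩ := Infinite.exists_notMem_finset ({e1} : Finset X)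
  obtain ⟨e3, h3⟩ := Infinite.exists_notMem_finset ({e1, e2} : Finset X)
  obtain ⟨e4, h4⟩ := Infinite.exists_notMem_finset ({e1, e2, e3} : Finset X)
  simp only [Finset.mem_insert, Finset.mem_singleton, not_or] at h2 h3 h4
  have h12 : e1 ≠ e2 := fun h => h2 h.symm
  have h13 : e1 ≠ e3 := fun h => h3.1 h.symm
  have h14 : e1 ≠ e4 := fun h => h4.1 h.symm
  have h23 : e2 ≠ e3 := fun h => h3.2 h.symm
  have h24 : e2 ≠ e4 := fun h => h4.2.1 h.symm
  have h34 : e3 ≠ e4 := fun h => h4.2.2 h.symm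
  have hshat : VCShatters (Fnegpt X) ({e1, e2, e3} : Finset X) := by
    intro b
    obtain ⟨f, hfF, v1, v2, v3⟩ :=
      exists_fnegpt e1 e2 e3 e4 h12 h13 h14 h23 h24 h34 (b e1) (b e2) (b e3)
    refine ⟨f, hfF, ?_⟩
    intro x hx
    simp only [Finset.mem_insert, Finset.mem_singleton] at hx
    rcases hx with rfl | rfl | rfl <;> assumption
  have hcard : ({e1, e2, e3} : Finset X).card = 3 := by
    rw [Finset.card_insert_of_notMem (by simp [h12, h13]),
      Finset.card_insert_of_notMem (by simp [h23]), Finset.card_singleton]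
  apply le_antisymm
  · apply iSup_le
    rintro ⟨s, hs⟩
    have := vcshatters_le_three hs
    exact_mod_cast this
  · have hle := le_iSup (fun s : {s : Finset X // VCShatters (Fnegpt X) s} =>
      (s.1.card : WithBot ℕ∞)) ⟨{e1, e2, e3}, hshat⟩
    rw [hcard] at hle
    exact_mod_cast hle

lemma ldim_fnegpt [Infinite X] : Ldim (Fnegpt X) = (3 : WithBot ℕ∞) := by
  obtain ⟨e1, h1⟩ := Infinite.exists_notMem_finset ({} : Finset X)
  obtain ⟨e2, h2⟩ := Infinite.exists_notMem_finset ({e1} : Finset X)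
  obtain ⟨e3, h3⟩ := Infinite.exists_notMem_finset ({e1, e2} : Finset X)
  obtain ⟨e4, h4⟩ := Infinite.exists_notMem_finset ({e1, e2, e3} : Finset X)
  simp only [Finset.mem_insert, Finset.mem_singleton, not_or] at h2 h3 h4
  have h12 : e1 ≠ e2 := fun h => h2 h.symm
  have h13 : e1 ≠ e3 := fun h => h3.1 h.symm
  have h14 : e1 ≠ e4 := fun h => h4.1 h.symm
  have h23 : e2 ≠ e3 := fun h => h3.2 h.symm
  have h24 : e2 ≠ e4 := fun h => h4.2.1 h.symm
  have h34 : e3 ≠ e4 := fun h => h4.2.2 h.symm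
  have hshat : ShattersDepth (Fnegpt X) 3 := by
    refine ⟨fun l => if l.length = 0 then e1 else if l.length = 1 then e2 else e3, ?_⟩
    intro b hb
    match b, hb with
    | [b0, b1, b2], _ =>
      obtain ⟨f, hfF, v1, v2, v3⟩ :=
        exists_fnegpt e1 e2 e3 e4 h12 h13 h14 h23 h24 h34 b0 b1 b2
      refine ⟨f, hfF, ?_⟩
      intro i hi
      simp only [List.length_cons, List.length_nil] at hi
      interval_cases i <;> simp [v1, v2, v3]
  apply le_antisymm
  · have := Ldim_le_of 3 (ptsnegs_not4 (fnegpt_shape (X := X)))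
    exact_mod_cast this
  · have := Ldim_ge hshat
    exact_mod_cast this

lemma eq_top_of_forall {v : WithBot ℕ∞} (h : ∀ n : ℕ, (n : WithBot ℕ∞) ≤ v) : v = ⊤ := by
  rcases v with _ | v
  · exact absurd (h 0) (WithBot.not_coe_le_bot _)
  · rcases v with _ | m
    · rfl
    · exfalso
      have hm := h (m + 1)
      have hc : ((m : ℕ) : WithBot ℕ∞) = some (some m) := rfl
      change ((m+1 : ℕ) : WithBot ℕ∞) ≤ ((m : ℕ) : WithBot ℕ∞) at hm
      have : m + 1 ≤ m := by exact_mod_cast hm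
      omega

lemma vcdim_soa [Infinite X] :
    VCdim {h : X → Bool | ∃ G ⊆ Fnegpt X, h = SOA G} = (⊤ : WithBot ℕ∞) := by
  apply eq_top_of_forall
  intro n
  set e := Infinite.natEmbedding X with he
  set s : Finset X := (Finset.range n).map e with hs
  have hmem : ∀ x, x ∈ s ↔ ∃ i < n, e i = x := by
    intro x; simp [hs, Finset.mem_map]
  have hshat : VCShatters {h : X → Bool | ∃ G ⊆ Fnegpt X, h = SOA G} s := by
    intro b
    set T : Set X := {x | x ∈ s ∧ b x = true} ∪ {e n, e (n+1), e (n+2)} with hT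
    have hy1 : e n ∈ T := Or.inr (by simp)
    have hy2 : e (n+1) ∈ T := Or.inr (by simp)
    have hy3 : e (n+2) ∈ T := Or.inr (by simp)
    have d12 : e n ≠ e (n+1) := fun h => by simpa using e.injective h
    have d13 : e n ≠ e (n+2) := fun h => by simpa using e.injective h
    have d23 : e (n+1) ≠ e (n+2) := fun h => by simpa using e.injective h
    refine ⟨SOA (Gof T), ⟨Gof T, Gof_subset T, rfl⟩, ?_⟩
    intro x hx
    obtain ⟨i, hi, rfl⟩ := (hmem x).mp hx
    cases hbx : b (e i)
    · have hnT : e i ∉ T := by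
        rintro (⟨_, hbt⟩ | h | h | h)
        · rw [hbx] at hbt; exact Bool.false_ne_true hbt
        · have := e.injective h; omega
        · have := e.injective h; omega
        · have := e.injective h; omega
      rw [SOA_Gof_false hnT hy1 hy2 hy3 d12 d13 d23]
    · exact SOA_Gof_true (Or.inl ⟨hx, hbx⟩)
  have hcard : s.card = n := by rw [hs, Finset.card_map, Finset.card_range]
  have hle := le_iSup (fun t : {t : Finset X //
      VCShatters {h : X → Bool | ∃ G ⊆ Fnegpt X, h = SOA G} t} =>
    (t.1.card : WithBot ℕ∞)) ⟨s, hshat⟩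
  rw [hcard] at hle
  exact hle

end Final

/-- The class of point and negated point functions on a countably infinite set has VC and
Littlestone dimension `3`, but the class of all SOA classifiers of its subclasses has
infinite VC dimension. -/
theorem stmt16 (X : Type*) [Countable X] [Infinite X] :
    VCdim (Fnegpt X) = (3 : WithBot ℕ∞) ∧
    Ldim (Fnegpt X) = (3 : WithBot ℕ∞) ∧
    VCdim {h : X → Bool | ∃ G ⊆ Fnegpt X, h = SOA G} = (⊤ : WithBot ℕ∞) := by
  exact ⟨vcdim_fnegpt, ldim_fnegpt, vcdim_soa⟩
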